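/- Let $P \subseteq \mathbb{R}^{d_1}$ and $Q \subseteq \mathbb{R}^{d_2}$ be compact convex sets each containing the origin. Then the Lebesgue measure in $\mathbb{R}^{d_1+d_2}$ of the convex hull of $(P \times \{0\}) \cup (\{0\} \times Q)$ equals $\dfrac{d_1!\, d_2!}{(d_1+d_2)!}\, \lambda_{d_1}(P)\, \lambda_{d_2}(Q)$. -/

import Mathlib

open MeasureTheory Set
open scoped Pointwise

section Aux

variable {E : Type*} [NormedAddCommGroup E] [NormedSpace ℝ E]

lemma auxSmulSubset {P : Set E} (hconv : Convex ℝ P) (h0 : (0:E) ∈ P)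
    {s t : ℝ} (hs : 0 ≤ s) (hst : s ≤ t) : s • P ⊆ t • P := by
  rcases eq_or_lt_of_le (hs.trans hst) with ht | ht
  · rw [← ht] at hst ⊢
    obtain rfl : s = 0 := le_antisymm hst hs
    exact subset_rfl
  · rintro _ ⟨p, hp, rfl⟩
    have h01 : 0 ≤ s / t := div_nonneg hs ht.le
    have h11 : s / t ≤ 1 := div_le_one_of_le₀ hst ht.le
    refine ⟨(s/t) • p, ?_, ?_⟩
    · have := hconv h0 hp (by linarith : (0:ℝ) ≤ 1 - s/t) h01 (by ring)
      simpa using this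
    · show t • ((s/t) • p) = s • p
      rw [smul_smul, mul_comm, div_mul_cancel₀ _ ht.ne']

/-- the set of admissible scales -/
def mSet (P : Set E) (x : E) : Set ℝ := {r : ℝ | r ∈ Icc (0:ℝ) 1 ∧ x ∈ r • P}

noncomputable def mfun (P : Set E) (x : E) : ℝ := sInf (mSet P x)

lemma mSet_isCompact {P : Set E} (hPc : IsCompact P) (x : E) : IsCompact (mSet P x) := by
  have hT : IsCompact ((Icc (0:ℝ) 1 ×ˢ P) ∩ {w : ℝ × E | w.1 • w.2 = x}) := by
    refine (isCompact_Icc.prod hPc).inter_right ?_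
    exact isClosed_singleton.preimage (continuous_fst.smul continuous_snd)
  have himg : mSet P x = Prod.fst '' ((Icc (0:ℝ) 1 ×ˢ P) ∩ {w : ℝ × E | w.1 • w.2 = x}) := by
    ext r
    constructor
    · rintro ⟨hr, p, hp, rfl⟩
      exact ⟨(r, p), ⟨⟨hr, hp⟩, rfl⟩, rfl⟩
    · rintro ⟨⟨r', p⟩, ⟨⟨hr, hp⟩, hx⟩, rfl⟩
      exact ⟨hr, p, hp, hx⟩
  rw [himg]
  exact hT.image continuous_fst

lemma mSet_nonempty {P : Set E} {x : E} (hx : x ∈ P) : (mSet P x).Nonempty :=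
  ⟨1, ⟨zero_le_one, le_rfl⟩, ⟨x, hx, one_smul _ _⟩⟩

lemma mfun_mem {P : Set E} (hPc : IsCompact P) {x : E} (hx : x ∈ P) :
    mfun P x ∈ mSet P x :=
  (mSet_isCompact hPc x).sInf_mem (mSet_nonempty hx)

lemma mfun_le {P : Set E} {x : E} {r : ℝ} (hr : r ∈ Icc (0:ℝ) 1) (hx : x ∈ r • P) :
    mfun P x ≤ r :=
  csInf_le ⟨0, fun _ hy => hy.1.1⟩ ⟨hr, hx⟩

lemma sublevel {P : Set E} (hPc : IsCompact P) (hconv : Convex ℝ P) (h0 : (0:E) ∈ P)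
    {c : ℝ} (h0c : 0 ≤ c) (hc1 : c ≤ 1) :
    {x : E | x ∈ P ∧ mfun P x ≤ c} = c • P := by
  ext x
  constructor
  · rintro ⟨hxP, hle⟩
    have hm := mfun_mem hPc hxP
    exact auxSmulSubset hconv h0 hm.1.1 hle hm.2
  · rintro ⟨p, hp, rfl⟩
    constructor
    · have := hconv h0 hp (by linarith : (0:ℝ) ≤ 1 - c) h0c (by ring)
      simpa using this
    · exact mfun_le ⟨h0c, hc1⟩ ⟨p, hp, rfl⟩

end Aux
section Aux2

open Classical in
noncomputable def gfun {n : ℕ} (P : Set (Fin n → ℝ)) (x : Fin n → ℝ) : ℝ :=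
  if x ∈ P then mfun P x else 1

variable {n : ℕ} {P : Set (Fin n → ℝ)}

lemma gfun_nonneg (hPc : IsCompact P) (x : Fin n → ℝ) : 0 ≤ gfun P x := by
  unfold gfun
  split_ifs with h
  · exact (mfun_mem hPc h).1.1
  · exact zero_le_one

lemma gfun_le_one (hPc : IsCompact P) (x : Fin n → ℝ) : gfun P x ≤ 1 := by
  unfold gfun
  split_ifs with h
  · exact (mfun_mem hPc h).1.2
  · exact le_rfl

lemma gfun_sublevel (hPc : IsCompact P) (hconv : Convex ℝ P) (h0 : (0 : Fin n → ℝ) ∈ P)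
    {c : ℝ} (h0c : 0 ≤ c) (hc1 : c ≤ 1) :
    {x : Fin n → ℝ | x ∈ P ∧ gfun P x ≤ c} = c • P := by
  rw [← sublevel hPc hconv h0 h0c hc1]
  ext x
  simp only [mem_setOf_eq, and_congr_right_iff]
  intro hx
  unfold gfun
  rw [if_pos hx]

lemma gfun_measurable (hPc : IsCompact P) (hconv : Convex ℝ P) (h0 : (0 : Fin n → ℝ) ∈ P) :
    Measurable (gfun P) := by
  apply measurable_of_Iic
  intro c
  by_cases h1 : 1 ≤ c
  · convert MeasurableSet.univ
    ext x
    simp only [mem_preimage, mem_Iic, mem_univ, iff_true]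
    exact (gfun_le_one hPc x).trans h1
  · by_cases h0c : 0 ≤ c
    · have hc1 : c ≤ 1 := le_of_not_ge h1
      have : gfun P ⁻¹' Iic c = c • P := by
        rw [← gfun_sublevel hPc hconv h0 h0c hc1]
        ext x
        simp only [mem_preimage, mem_Iic, mem_setOf_eq]
        constructor
        · intro hle
          have hxP : x ∈ P := by
            by_contra hxP
            have : gfun P x = 1 := by unfold gfun; rw [if_neg hxP]
            rw [this] at hle
            exact h1 hle
          exact ⟨hxP, hle⟩
        · exact fun h => h.2
      rw [this]
      have : IsCompact (c • P) := hPc.smul c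
      exact this.measurableSet
    · convert MeasurableSet.empty
      ext x
      simp only [mem_preimage, mem_Iic, mem_empty_iff_false, iff_false, not_le]
      exact lt_of_lt_of_le (lt_of_not_ge h0c) (gfun_nonneg hPc x)


lemma betaNat (a b : ℕ) :
    ∫ x in (0:ℝ)..1, x ^ a * (1 - x) ^ b
      = (Nat.factorial a : ℝ) * (Nat.factorial b) / (Nat.factorial (a + b + 1)) := by
  induction b generalizing a with
  | zero =>
    simp only [pow_zero, mul_one, Nat.factorial_zero, Nat.cast_one, Nat.add_zero]
    rw [integral_pow]
    rw [Nat.factorial_succ]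
    push_cast
    rw [one_pow, zero_pow (by omega)]
    have : (a:ℝ) + 1 ≠ 0 := by positivity
    field_simp
    norm_num
  | succ b ih =>
    have key : ∫ x in (0:ℝ)..1,
        (((a:ℝ)+1) * (x ^ a * (1 - x) ^ (b+1)) - ((b:ℝ)+1) * (x ^ (a+1) * (1 - x) ^ b)) = 0 := by
      have hder : ∀ x ∈ uIcc (0:ℝ) 1,
          HasDerivAt (fun y : ℝ => y ^ (a+1) * (1 - y) ^ (b+1))
            (((a:ℝ)+1) * (x ^ a * (1 - x) ^ (b+1)) - ((b:ℝ)+1) * (x ^ (a+1) * (1 - x) ^ b)) x := by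
        intro x _
        have h₁ : HasDerivAt (fun y : ℝ => y ^ (a+1)) (((a:ℝ)+1) * x ^ a) x := by
          simpa using hasDerivAt_pow (a+1) x
        have h₂ : HasDerivAt (fun y : ℝ => (1 - y) ^ (b+1))
            (-(((b:ℝ)+1) * (1 - x) ^ b)) x := by
          have hin : HasDerivAt (fun y : ℝ => 1 - y) (-1) x := by
            simpa using (hasDerivAt_id x).const_sub (1:ℝ)
          have := (hasDerivAt_pow (b+1) (1 - x)).comp x hin
          simpa [Function.comp_def] using this
        have : HasDerivAt (fun y : ℝ => y ^ (a+1) * (1 - y) ^ (b+1)) _ x := h₁.fun_mul h₂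
        convert this using 1
        push_cast
        ring
      have hcont : IntervalIntegrable
          (fun x : ℝ => ((a:ℝ)+1) * (x ^ a * (1 - x) ^ (b+1)) - ((b:ℝ)+1) * (x ^ (a+1) * (1 - x) ^ b))
          volume 0 1 := by
        apply Continuous.intervalIntegrable
        continuity
      rw [intervalIntegral.integral_eq_sub_of_hasDerivAt hder hcont]
      norm_num
    have hi1 : IntervalIntegrable (fun x : ℝ => x ^ a * (1 - x) ^ (b+1)) volume 0 1 := by
      apply Continuous.intervalIntegrable; continuity
    have hi2 : IntervalIntegrable (fun x : ℝ => x ^ (a+1) * (1 - x) ^ b) volume 0 1 := by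
      apply Continuous.intervalIntegrable; continuity
    rw [intervalIntegral.integral_sub (hi1.const_mul _) (hi2.const_mul _),
      intervalIntegral.integral_const_mul, intervalIntegral.integral_const_mul,
      sub_eq_zero] at key
    have hI2 := ih (a+1)
    have hidx : (a+1) + b + 1 = a + (b+1) + 1 := by omega
    rw [hidx] at hI2
    rw [hI2] at key
    have ha : (a:ℝ) + 1 ≠ 0 := by positivity
    have hfac : ((a + (b+1) + 1).factorial : ℝ) ≠ 0 := by
      exact_mod_cast (Nat.factorial_pos _).ne'
    have h1 : ((a+1).factorial : ℝ) = ((a:ℝ)+1) * (a.factorial : ℝ) := by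
      rw [Nat.factorial_succ]; push_cast; ring
    have h2 : (((b+1)).factorial : ℝ) = ((b:ℝ)+1) * (b.factorial : ℝ) := by
      rw [Nat.factorial_succ]; push_cast; ring
    apply mul_left_cancel₀ ha
    rw [key, h1, h2]
    field_simp
end Aux2
section Main

variable {n : ℕ} {P : Set (Fin n → ℝ)}

lemma Icalc (hPc : IsCompact P) (hconv : Convex ℝ P) (h0 : (0 : Fin n → ℝ) ∈ P) (k : ℕ) :
    ∫⁻ x in P, ENNReal.ofReal ((1 - gfun P x) ^ k)
      = ENNReal.ofReal (((n.factorial : ℝ) * k.factorial) / ((n + k).factorial)) * volume P := by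
  have hPmeas := hPc.measurableSet
  have hfinP : volume P ≠ ⊤ := hPc.measure_lt_top.ne
  cases k with
  | zero =>
    simp only [pow_zero, Nat.factorial_zero, Nat.cast_one, mul_one, Nat.add_zero,
      ENNReal.ofReal_one]
    rw [div_self (by exact_mod_cast (Nat.factorial_pos n).ne' : ((n.factorial : ℝ)) ≠ 0)]
    simp [Measure.restrict_apply_univ]
  | succ e =>
    have gmeas := gfun_measurable hPc hconv h0
    have f_nn : 0 ≤ᵐ[volume.restrict P] fun x => 1 - gfun P x :=
      Filter.Eventually.of_forall fun x => by
        simp only [Pi.zero_apply]; linarith [gfun_le_one hPc x]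
    have f_mble : AEMeasurable (fun x => 1 - gfun P x) (volume.restrict P) :=
      (measurable_const.sub gmeas).aemeasurable
    have g_intble : ∀ t > (0:ℝ), IntervalIntegrable (fun t : ℝ => ((e:ℝ)+1) * t ^ e) volume 0 t :=
      fun t _ => (Continuous.intervalIntegrable (by continuity) _ _)
    have g_nn : ∀ᵐ t ∂(volume.restrict (Set.Ioi (0:ℝ))), 0 ≤ ((e:ℝ)+1) * t ^ e := by
      filter_upwards [self_mem_ae_restrict measurableSet_Ioi] with t ht
      have : (0:ℝ) < t := ht
      positivity
    have lc := lintegral_comp_eq_lintegral_meas_le_mul (volume.restrict P)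
      (f := fun x => 1 - gfun P x) (g := fun t : ℝ => ((e:ℝ)+1) * t ^ e)
      f_nn f_mble g_intble g_nn
    have hLHS : ∀ x : Fin n → ℝ,
        ENNReal.ofReal (∫ t in (0:ℝ)..(1 - gfun P x), ((e:ℝ)+1) * t ^ e)
          = ENNReal.ofReal ((1 - gfun P x) ^ (e+1)) := by
      intro x
      congr 1
      rw [intervalIntegral.integral_const_mul, integral_pow, zero_pow (by omega), sub_zero]
      have he : ((e:ℝ)+1) ≠ 0 := by positivity
      push_cast
      field_simp
    rw [show (fun x : Fin n → ℝ => ENNReal.ofReal ((1 - gfun P x) ^ (e+1)))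
        = fun x => ENNReal.ofReal (∫ t in (0:ℝ)..(1 - gfun P x), ((e:ℝ)+1) * t ^ e) from
      funext fun x => (hLHS x).symm]
    rw [lc]
    -- split the t-integral
    rw [← Set.Ioc_union_Ioi_eq_Ioi (zero_le_one (α := ℝ))]
    rw [lintegral_union measurableSet_Ioi (Set.Ioc_disjoint_Ioi le_rfl)]
    have hzero : ∫⁻ t in Set.Ioi (1:ℝ),
        (volume.restrict P) {a | t ≤ 1 - gfun P a} * ENNReal.ofReal (((e:ℝ)+1) * t ^ e) = 0 := by
      rw [setLIntegral_congr_fun measurableSet_Ioi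
        (fun t (ht : t ∈ Set.Ioi (1:ℝ)) => ?_), lintegral_zero]
      have hempty : {a : Fin n → ℝ | t ≤ 1 - gfun P a} = ∅ := by
        ext a
        simp only [Set.mem_setOf_eq, Set.mem_empty_iff_false, iff_false, not_le]
        have := gfun_nonneg hPc a
        have ht' : (1:ℝ) < t := ht
        linarith
      rw [hempty]
      simp
    rw [hzero, add_zero]
    have hmeasval : ∀ t ∈ Set.Ioc (0:ℝ) 1,
        (volume.restrict P) {a | t ≤ 1 - gfun P a} * ENNReal.ofReal (((e:ℝ)+1) * t ^ e)
          = volume P * ENNReal.ofReal ((1-t)^n * (((e:ℝ)+1) * t ^ e)) := by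
      rintro t ⟨ht0, ht1⟩
      have hset : {a : Fin n → ℝ | t ≤ 1 - gfun P a} ∩ P = (1 - t) • P := by
        rw [← gfun_sublevel hPc hconv h0 (by linarith) (by linarith)]
        ext x
        simp only [Set.mem_inter_iff, Set.mem_setOf_eq]
        constructor
        · rintro ⟨hle, hxP⟩; exact ⟨hxP, by linarith⟩
        · rintro ⟨hxP, hle⟩; exact ⟨by linarith, hxP⟩
      rw [Measure.restrict_apply' hPmeas, hset,
        Measure.addHaar_smul_of_nonneg volume (by linarith : (0:ℝ) ≤ 1 - t) P,
        Module.finrank_fin_fun]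
      rw [ENNReal.ofReal_mul (pow_nonneg (by linarith) n)]
      ring
    rw [setLIntegral_congr_fun measurableSet_Ioc
      (fun t ht => hmeasval t ht)]
    rw [lintegral_const_mul' _ _ hfinP]
    have hint : IntegrableOn (fun t : ℝ => (1-t)^n * (((e:ℝ)+1) * t ^ e)) (Set.Ioc 0 1) volume :=
      (Continuous.integrableOn_Ioc (by continuity))
    have hae : 0 ≤ᵐ[volume.restrict (Set.Ioc (0:ℝ) 1)]
        fun t : ℝ => (1-t)^n * (((e:ℝ)+1) * t ^ e) := by
      filter_upwards [self_mem_ae_restrict measurableSet_Ioc] with t ht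
      rcases ht with ⟨ht0, ht1⟩
      have h1 : (0:ℝ) ≤ (1-t)^n := pow_nonneg (by linarith) n
      have h2 : (0:ℝ) ≤ t ^ e := by positivity
      positivity
    rw [← ofReal_integral_eq_lintegral_ofReal hint hae]
    rw [← intervalIntegral.integral_of_le zero_le_one]
    rw [show (fun t : ℝ => (1-t)^n * (((e:ℝ)+1) * t ^ e))
        = fun t : ℝ => ((e:ℝ)+1) * (t ^ e * (1-t)^n) from funext fun t => by ring]
    rw [intervalIntegral.integral_const_mul, betaNat e n]
    rw [mul_comm (volume P)]
    congr 2
    have hidx : e + n + 1 = n + (e + 1) := by omega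
    rw [hidx, Nat.factorial_succ]
    have hfac : ((n + (e+1)).factorial : ℝ) ≠ 0 := by
      exact_mod_cast (Nat.factorial_pos _).ne'
    push_cast
    rw [← mul_div_assoc]
    congr 1
    ring

end Main
/-- For compact convex sets `P ⊆ ℝ^{d₁}` and `Q ⊆ ℝ^{d₂}` containing the origin, the
Lebesgue measure of the convex hull of `(P × {0}) ∪ ({0} × Q)` in `ℝ^{d₁+d₂}` equals
`(d₁! d₂! / (d₁+d₂)!) · λ(P) · λ(Q)`. -/
theorem volume_convexHull_union_prod {d₁ d₂ : ℕ}
    (P : Set (Fin d₁ → ℝ)) (Q : Set (Fin d₂ → ℝ))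
    (hPc : IsCompact P) (hPconv : Convex ℝ P) (hP0 : (0 : Fin d₁ → ℝ) ∈ P)
    (hQc : IsCompact Q) (hQconv : Convex ℝ Q) (hQ0 : (0 : Fin d₂ → ℝ) ∈ Q) :
    (volume (convexHull ℝ ((P ×ˢ ({0} : Set (Fin d₂ → ℝ))) ∪
        (({0} : Set (Fin d₁ → ℝ)) ×ˢ Q)))).toReal =
      ((Nat.factorial d₁ : ℝ) * (Nat.factorial d₂ : ℝ) / (Nat.factorial (d₁ + d₂) : ℝ)) *
        (volume P).toReal * (volume Q).toReal := by
  set A : Set ((Fin d₁ → ℝ) × (Fin d₂ → ℝ)) := P ×ˢ ({0} : Set (Fin d₂ → ℝ)) with hA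
  set B : Set ((Fin d₁ → ℝ) × (Fin d₂ → ℝ)) := ({0} : Set (Fin d₁ → ℝ)) ×ˢ Q with hB
  set K : Set ((Fin d₁ → ℝ) × (Fin d₂ → ℝ)) := convexJoin ℝ A B with hK
  have hAconv : Convex ℝ A := hPconv.prod (convex_singleton 0)
  have hBconv : Convex ℝ B := (convex_singleton 0).prod hQconv
  have hAne : A.Nonempty := ⟨(0, 0), hP0, rfl⟩
  have hBne : B.Nonempty := ⟨(0, 0), rfl, hQ0⟩
  have hhull : convexHull ℝ (A ∪ B) = K := by
    rw [convexHull_union hAne hBne, hAconv.convexHull_eq, hBconv.convexHull_eq]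
  -- membership characterization
  have hmem : ∀ z : (Fin d₁ → ℝ) × (Fin d₂ → ℝ), z ∈ K ↔
      ∃ t ∈ Icc (0:ℝ) 1, ∃ p ∈ P, ∃ q ∈ Q, z = ((1-t) • p, t • q) := by
    intro z
    rw [hK, mem_convexJoin]
    constructor
    · rintro ⟨a, ⟨haP, ha0⟩, b, ⟨hb0, hbQ⟩, hseg⟩
      rw [segment_eq_image] at hseg
      obtain ⟨t, ht, hz⟩ := hseg
      refine ⟨t, ht, a.1, haP, b.2, hbQ, ?_⟩
      have ha0' : a.2 = 0 := ha0
      have hb0' : b.1 = 0 := hb0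
      rw [← hz]
      rw [Prod.ext_iff]
      constructor
      · show ((1-t) • a + t • b).1 = (1-t) • a.1
        simp [hb0']
      · show ((1-t) • a + t • b).2 = t • b.2
        simp [ha0']
    · rintro ⟨t, ⟨ht0, ht1⟩, p, hp, q, hq, rfl⟩
      refine ⟨(p, 0), ⟨hp, rfl⟩, (0, q), ⟨rfl, hq⟩, ?_⟩
      rw [segment_eq_image]
      refine ⟨t, ⟨ht0, ht1⟩, ?_⟩
      rw [Prod.ext_iff]
      constructor
      · show ((1-t) • (p, (0 : Fin d₂ → ℝ)) + t • ((0 : Fin d₁ → ℝ), q)).1 = (1-t) • p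
        simp
      · show ((1-t) • (p, (0 : Fin d₂ → ℝ)) + t • ((0 : Fin d₁ → ℝ), q)).2 = t • q
        simp
  -- compactness
  have hKc : IsCompact K := by
    have himg : K = (fun w : ℝ × (Fin d₁ → ℝ) × (Fin d₂ → ℝ) =>
        ((1 - w.1) • w.2.1, w.1 • w.2.2)) '' (Icc (0:ℝ) 1 ×ˢ (P ×ˢ Q)) := by
      ext z
      rw [hmem z]
      constructor
      · rintro ⟨t, ht, p, hp, q, hq, rfl⟩
        exact ⟨(t, p, q), ⟨ht, hp, hq⟩, rfl⟩
      · rintro ⟨⟨t, p, q⟩, ⟨ht, hp, hq⟩, rfl⟩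
        exact ⟨t, ht, p, hp, q, hq, rfl⟩
    rw [himg]
    apply (isCompact_Icc.prod (hPc.prod hQc)).image
    fun_prop
  have hKmeas : MeasurableSet K := hKc.measurableSet
  have hPmeas : MeasurableSet P := hPc.measurableSet
  -- slices
  open Classical in
  have hslice : ∀ x : Fin d₁ → ℝ,
      Prod.mk x ⁻¹' K = if x ∈ P then (1 - mfun P x) • Q else ∅ := by
    intro x
    ext y
    simp only [mem_preimage]
    rw [hmem (x, y)]
    split_ifs with hxP
    · constructor
      · rintro ⟨t, ⟨ht0, ht1⟩, p, hp, q, hq, hz⟩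
        rw [Prod.ext_iff] at hz
        obtain ⟨hx, hy⟩ := hz
        have hm : mfun P x ≤ 1 - t := mfun_le ⟨by linarith, by linarith⟩ ⟨p, hp, hx.symm⟩
        have hyt : y ∈ t • Q := ⟨q, hq, hy.symm⟩
        exact auxSmulSubset hQconv hQ0 ht0 (by linarith) hyt
      · rintro ⟨q, hq, rfl⟩
        have hm := mfun_mem hPc hxP
        obtain ⟨p, hp, hxp⟩ := hm.2
        refine ⟨1 - mfun P x, ⟨by linarith [hm.1.2], by linarith [hm.1.1]⟩, p, hp, q, hq, ?_⟩
        rw [Prod.ext_iff]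
        constructor
        · show x = (1 - (1 - mfun P x)) • p
          rw [show 1 - (1 - mfun P x) = mfun P x by ring]
          exact hxp.symm
        · rfl
    · constructor
      · rintro ⟨t, ⟨ht0, ht1⟩, p, hp, q, hq, hz⟩
        exfalso
        apply hxP
        rw [Prod.ext_iff] at hz
        have hx : x ∈ (1-t) • P := ⟨p, hp, hz.1.symm⟩
        have := auxSmulSubset hPconv hP0 (by linarith : (0:ℝ) ≤ 1-t) (by linarith : 1-t ≤ 1) hx
        obtain ⟨p', hp', hp'x⟩ := this
        have : p' = x := by simpa using hp'x
        rwa [← this]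
      · exact fun h => absurd h (notMem_empty y)
  have hfinQ : volume Q ≠ ⊤ := hQc.measure_lt_top.ne
  have gmeas := gfun_measurable hPc hPconv hP0
  -- slice volumes
  have hvolslice : ∀ x : Fin d₁ → ℝ, volume (Prod.mk x ⁻¹' K)
      = P.indicator (fun x => ENNReal.ofReal ((1 - gfun P x) ^ d₂) * volume Q) x := by
    intro x
    rw [hslice x]
    split_ifs with hxP
    · rw [Set.indicator_of_mem hxP]
      have h0m := (mfun_mem hPc hxP).1
      rw [Measure.addHaar_smul_of_nonneg volume (by linarith [h0m.2] : (0:ℝ) ≤ 1 - mfun P x) Q,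
        Module.finrank_fin_fun]
      have : gfun P x = mfun P x := by unfold gfun; rw [if_pos hxP]
      rw [this]
    · rw [Set.indicator_of_notMem hxP]
      exact measure_empty
  -- Fubini
  have hKvol : volume K =
      (∫⁻ x in P, ENNReal.ofReal ((1 - gfun P x) ^ d₂)) * volume Q := by
    rw [Measure.volume_eq_prod, Measure.prod_apply hKmeas]
    rw [lintegral_congr hvolslice]
    rw [lintegral_indicator hPmeas]
    rw [lintegral_mul_const (f := fun x => ENNReal.ofReal ((1 - gfun P x) ^ d₂)) _
      (((measurable_const.sub gmeas).pow_const d₂).ennreal_ofReal)]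
  rw [hhull, hKvol, Icalc hPc hPconv hP0 d₂]
  have hc : (0:ℝ) ≤ (d₁.factorial : ℝ) * (d₂.factorial : ℝ) / ((d₁ + d₂).factorial : ℝ) := by
    positivity
  rw [ENNReal.toReal_mul, ENNReal.toReal_mul, ENNReal.toReal_ofReal hc]
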